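/- Let n ≥ 2 and let F be a homogeneous polynomial of degree d ≥ 3 in the n+1 complex variables x₀, …, x_n whose projective zero locus is smooth, i.e. for every x ∈ ℂ^{n+1} with x ≠ 0 and F(x) = 0, the gradient (∂F/∂x₀(x), …, ∂F/∂x_n(x)) is nonzero. Then there exists x ∈ ℂ^{n+1}, x ≠ 0, with F(x) = 0 and det(∂²F/∂xᵢ∂xⱼ(x))_{i,j} = 0; that is, the hypersurface has a parabolic point. (This is the paper's assertion that smooth algebraic projective hypersurfaces of degree ≥ 3 always have parabolic points.) -/

import Mathlib

open MvPolynomial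

namespace ParabolicAux

lemma degree_sub_single {m : ℕ} (u : Fin m →₀ ℕ) (i : Fin m) (hi : 1 ≤ u i) :
    (u - Finsupp.single i 1).degree + 1 = u.degree := by
  have h : u = (u - Finsupp.single i 1) + Finsupp.single i 1 := by
    ext j
    rcases eq_or_ne j i with rfl | hj
    · simp [Finsupp.sub_apply]; omega
    · simp [Finsupp.sub_apply, Finsupp.single_apply, Ne.symm hj]
  conv_rhs => rw [h]
  simp [Finsupp.degree_eq_weight_one, map_add, Finsupp.weight_apply, Finsupp.sum_single_index]

/-- The partial derivative of a homogeneous polynomial is homogeneous of degree one less. -/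
lemma pderiv_isHomogeneous {m d : ℕ} {F : MvPolynomial (Fin m) ℂ} (hF : F.IsHomogeneous d)
    (i : Fin m) : (pderiv i F).IsHomogeneous (d - 1) := by
  conv_lhs => rw [F.as_sum]
  rw [map_sum]
  apply MvPolynomial.IsHomogeneous.sum
  intro u hu
  rw [pderiv_monomial]
  by_cases hui : u i = 0
  · simp [hui]
    exact isHomogeneous_zero _ _ _
  · apply isHomogeneous_monomial
    have hdeg : u.degree = d := by
      rw [Finsupp.degree_eq_weight_one]; exact hF (mem_support_iff.mp hu)
    have := degree_sub_single u i (by omega)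
    omega

/-- The determinant of a matrix of homogeneous polynomials is homogeneous. -/
lemma det_isHomogeneous {m e : ℕ} (M : Matrix (Fin m) (Fin m) (MvPolynomial (Fin m) ℂ))
    (hM : ∀ i j, (M i j).IsHomogeneous e) : M.det.IsHomogeneous (m * e) := by
  rw [Matrix.det_apply]
  apply MvPolynomial.IsHomogeneous.sum
  intro σ _
  have hprod : (∏ i, M (σ i) i).IsHomogeneous (m * e) := by
    have := MvPolynomial.IsHomogeneous.prod Finset.univ (fun i => M (σ i) i) (fun _ => e)
      (fun i _ => hM _ _)
    simpa [Finset.sum_const, Finset.card_univ, mul_comm] using this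
  rcases Int.units_eq_one_or (Equiv.Perm.sign σ) with h | h <;> rw [h] <;> simp [hprod]
  exact hprod.neg

/-- Homogeneous component of a product with a homogeneous polynomial. -/
lemma homogeneousComponent_mul_right {m p t : ℕ} {P : MvPolynomial (Fin m) ℂ}
    (hP : P.IsHomogeneous p) (a : MvPolynomial (Fin m) ℂ) :
    homogeneousComponent (t + p) (a * P) = homogeneousComponent t a * P := by
  conv_lhs => rw [← a.sum_homogeneousComponent]
  rw [Finset.sum_mul, map_sum]
  have hterm : ∀ k, homogeneousComponent (t + p) (homogeneousComponent k a * P)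
      = if k = t then homogeneousComponent k a * P else 0 := by
    intro k
    have hmem : homogeneousComponent k a * P ∈ homogeneousSubmodule (Fin m) ℂ (k + p) := by
      rw [mem_homogeneousSubmodule]
      exact (homogeneousComponent_isHomogeneous k a).mul hP
    rw [homogeneousComponent_of_mem hmem]
    by_cases h : k = t <;> simp [h]
    intro h'; omega
  simp_rw [hterm]
  rw [Finset.sum_ite_eq' (Finset.range (a.totalDegree + 1)) t]
  by_cases h : t ∈ Finset.range (a.totalDegree + 1)
  · simp [h]
  · simp only [h, if_neg, if_false]
    have : a.totalDegree < t := by simp at h; omega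
    rw [homogeneousComponent_eq_zero _ _ this, zero_mul]

instance homsub_finite (m s : ℕ) :
    FiniteDimensional ℂ (homogeneousSubmodule (Fin m) ℂ s) := by
  apply Submodule.finiteDimensional_of_le (S₂ := restrictTotalDegree (Fin m) ℂ s)
  intro φ hφ
  rw [mem_restrictTotalDegree]
  exact MvPolynomial.IsHomogeneous.totalDegree_le hφ

/-- dimension of the space of homogeneous polynomials of degree `s` in `m` variables. -/
noncomputable def g (m s : ℕ) : ℕ := Module.finrank ℂ (homogeneousSubmodule (Fin m) ℂ s)

lemma map_mul_le {m s p : ℕ} {P : MvPolynomial (Fin m) ℂ} (hP : P.IsHomogeneous p) :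
    Submodule.map (LinearMap.mulLeft ℂ P) (homogeneousSubmodule (Fin m) ℂ s)
      ≤ homogeneousSubmodule (Fin m) ℂ (s + p) := by
  rintro _ ⟨a, ha, rfl⟩
  rw [mem_homogeneousSubmodule]
  rw [SetLike.mem_coe, mem_homogeneousSubmodule] at ha
  simpa [LinearMap.mulLeft_apply, add_comm] using hP.mul ha

lemma finrank_map_mul {m s : ℕ} {P : MvPolynomial (Fin m) ℂ} (hP0 : P ≠ 0) :
    Module.finrank ℂ (Submodule.map (LinearMap.mulLeft ℂ P)
      (homogeneousSubmodule (Fin m) ℂ s)) = g m s := by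
  have hinj : Function.Injective (LinearMap.mulLeft ℂ P) := by
    intro x y hxy
    exact mul_left_cancel₀ hP0 hxy
  exact (LinearEquiv.finrank_eq
    (Submodule.equivMapOfInjective _ hinj (homogeneousSubmodule (Fin m) ℂ s))).symm

lemma g_mono {m : ℕ} (hm : 1 ≤ m) : Monotone (g m) := by
  have step : ∀ s, g m s ≤ g m (s + 1) := by
    intro s
    have hX : (X (⟨0, by omega⟩ : Fin m) : MvPolynomial (Fin m) ℂ) ≠ 0 := X_ne_zero _
    rw [← finrank_map_mul (s := s) hX]
    exact Submodule.finrank_mono (map_mul_le (isHomogeneous_X _ _))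
  exact monotone_nat_of_le_succ step

lemma g_lower {m : ℕ} (hm : 3 ≤ m) (s : ℕ) : (s / 2 + 1) ^ 2 ≤ g m s := by
  set i0 : Fin m := ⟨0, by omega⟩
  set i1 : Fin m := ⟨1, by omega⟩
  set i2 : Fin m := ⟨2, by omega⟩
  set e : Fin (s/2+1) × Fin (s/2+1) → (Fin m →₀ ℕ) := fun ab =>
    Finsupp.single i0 (ab.1 : ℕ) + Finsupp.single i1 (ab.2 : ℕ)
      + Finsupp.single i2 (s - ab.1 - ab.2) with he
  have h01 : i0 ≠ i1 := by simp [i0, i1, Fin.ext_iff]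
  have h02 : i0 ≠ i2 := by simp [i0, i2, Fin.ext_iff]
  have h12 : i1 ≠ i2 := by simp [i1, i2, Fin.ext_iff]
  have happ0 : ∀ ab, e ab i0 = ab.1 := by
    intro ab; simp [he, Finsupp.single_apply, h01, h02, Ne.symm h01, Ne.symm h02]
  have happ1 : ∀ ab, e ab i1 = ab.2 := by
    intro ab; simp [he, Finsupp.single_apply, h01, h12, Ne.symm h01, Ne.symm h12]
  have hinj : Function.Injective e := by
    intro ab cd h
    have h0 := congrArg (fun f => f i0) h
    have h1 := congrArg (fun f => f i1) h
    simp only [happ0, happ1] at h0 h1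
    exact Prod.ext (Fin.ext h0) (Fin.ext h1)
  have hdeg : ∀ ab, (e ab).degree = s := by
    intro ab
    have hb1 : (ab.1 : ℕ) ≤ s / 2 := by omega
    have hb2 : (ab.2 : ℕ) ≤ s / 2 := by omega
    rw [he]
    set c := s - ab.1 - ab.2 with hc
    simp only [Finsupp.degree_eq_weight_one, map_add]
    rw [show ∀ (j : Fin m) (k : ℕ), (Finsupp.weight fun _ => 1) (Finsupp.single j k) = k by
      intros; simp [Finsupp.weight_apply, Finsupp.sum_single_index]]
    rw [show ∀ (j : Fin m) (k : ℕ), (Finsupp.weight fun _ => 1) (Finsupp.single j k) = k by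
      intros; simp [Finsupp.weight_apply, Finsupp.sum_single_index]]
    rw [show ∀ (j : Fin m) (k : ℕ), (Finsupp.weight fun _ => 1) (Finsupp.single j k) = k by
      intros; simp [Finsupp.weight_apply, Finsupp.sum_single_index]]
    show (ab.1:ℕ) + (ab.2:ℕ) + c = s
    omega
  have hindep : LinearIndependent ℂ (fun ab => (monomial (e ab) (1:ℂ))) := by
    have := (basisMonomials (Fin m) ℂ).linearIndependent
    have h2 := this.comp e hinj
    simp only [coe_basisMonomials] at h2
    exact h2
  have hspan : Submodule.span ℂ (Set.range (fun ab => (monomial (e ab) (1:ℂ))))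
      ≤ homogeneousSubmodule (Fin m) ℂ s := by
    rw [Submodule.span_le]
    rintro _ ⟨ab, rfl⟩
    rw [SetLike.mem_coe, mem_homogeneousSubmodule]
    exact isHomogeneous_monomial _ (hdeg ab)
  calc (s / 2 + 1) ^ 2 = Fintype.card (Fin (s/2+1) × Fin (s/2+1)) := by simp [sq]
    _ = Module.finrank ℂ (Submodule.span ℂ
          (Set.range (fun ab => (monomial (e ab) (1:ℂ))))) := (finrank_span_eq_card hindep).symm
    _ ≤ g m s := Submodule.finrank_mono hspan

/-- Every homogeneous polynomial of sufficiently high degree lies in the ideal,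
given that it contains the `N`-th powers of all the variables. -/
lemma homogeneous_mem_span {m N : ℕ} (hm : 1 ≤ m) (hN : 1 ≤ N) {P Q : MvPolynomial (Fin m) ℂ}
    (hX : ∀ i : Fin m, (X i : MvPolynomial (Fin m) ℂ) ^ N ∈ Ideal.span {P, Q})
    {t : ℕ} (ht : m * N ≤ t) {φ : MvPolynomial (Fin m) ℂ} (hφ : φ.IsHomogeneous t) :
    φ ∈ Ideal.span {P, Q} := by
  rw [show φ = ∑ u ∈ φ.support, monomial u (coeff u φ) from φ.as_sum]
  apply Ideal.sum_mem
  intro u hu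
  have hdeg : u.degree = t := by
    rw [Finsupp.degree_eq_weight_one]; exact hφ (mem_support_iff.mp hu)
  have hex : ∃ i : Fin m, N ≤ u i := by
    by_contra hcon
    push_neg at hcon
    have : u.degree ≤ m * (N - 1) := by
      rw [Finsupp.degree]
      calc ∑ i ∈ u.support, u i ≤ ∑ i ∈ u.support, (N - 1) := by
            apply Finset.sum_le_sum; intro i _; have := hcon i; omega
        _ ≤ m * (N - 1) := by
            rw [Finset.sum_const, smul_eq_mul]
            apply Nat.mul_le_mul_right
            simpa using Finset.card_le_card (Finset.subset_univ u.support)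
    have hmN : m * (N - 1) < m * N := by
      calc m * (N - 1) < m * (N - 1) + m := by omega
        _ = m * N := by rw [← Nat.mul_succ]; congr 1; omega
    omega
  obtain ⟨i, hi⟩ := hex
  have hsplit : monomial u (coeff u φ) =
      monomial (u - Finsupp.single i N) (coeff u φ) * (X i) ^ N := by
    rw [X_pow_eq_monomial, monomial_mul, mul_one]
    have huu : u - Finsupp.single i N + Finsupp.single i N = u := by
      ext j
      rcases eq_or_ne j i with rfl | hj
      · simp [Finsupp.sub_apply]; omega
      · simp [Finsupp.sub_apply, Finsupp.single_apply, Ne.symm hj]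
    rw [huu]
  rw [hsplit]
  exact Ideal.mul_mem_left _ _ (hX i)

/-- The key Hilbert-function inequality. -/
lemma key_ineq {m p q : ℕ} {P Q : MvPolynomial (Fin m) ℂ}
    (hP : P.IsHomogeneous p) (hQ : Q.IsHomogeneous q) (hP0 : P ≠ 0) (hQ0 : Q ≠ 0)
    {T : ℕ} (hT : ∀ t, T ≤ t → ∀ φ : MvPolynomial (Fin m) ℂ, φ.IsHomogeneous t →
      φ ∈ Ideal.span {P, Q}) :
    ∀ s, T ≤ s → g m (s + p + q) + g m s ≤ g m (s + q) + g m (s + p) := by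
  intro s hs
  set A := Submodule.map (LinearMap.mulLeft ℂ P) (homogeneousSubmodule (Fin m) ℂ (s + q)) with hA
  set B := Submodule.map (LinearMap.mulLeft ℂ Q) (homogeneousSubmodule (Fin m) ℂ (s + p)) with hB
  have hAle : A ≤ homogeneousSubmodule (Fin m) ℂ (s + p + q) := by
    refine le_trans (map_mul_le hP) ?_
    rw [show s + q + p = s + p + q by ring]
  have hBle : B ≤ homogeneousSubmodule (Fin m) ℂ (s + p + q) := by
    refine le_trans (map_mul_le hQ) ?_
    rw [show s + p + q = s + p + q by ring]
  haveI : FiniteDimensional ℂ A := Submodule.finiteDimensional_of_le hAle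
  haveI : FiniteDimensional ℂ B := Submodule.finiteDimensional_of_le hBle
  have hsup : homogeneousSubmodule (Fin m) ℂ (s + p + q) ≤ A ⊔ B := by
    intro φ hφ
    rw [mem_homogeneousSubmodule] at hφ
    have hmem : φ ∈ Ideal.span {P, Q} := hT (s + p + q) (by omega) φ hφ
    obtain ⟨u, v, huv⟩ := Ideal.mem_span_pair.mp hmem
    have hφeq : φ = homogeneousComponent (s + q) u * P + homogeneousComponent (s + p) v * Q := by
      have h1 : homogeneousComponent (s + p + q) φ = φ := by
        have := homogeneousComponent_of_mem (p := φ) (n := s + p + q) (m := s + p + q)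
          (by rw [mem_homogeneousSubmodule]; exact hφ)
        simpa using this
      rw [← h1, ← huv, map_add]
      rw [show s + p + q = (s + q) + p by ring, homogeneousComponent_mul_right hP u]
      rw [show s + q + p = (s + p) + q by ring, homogeneousComponent_mul_right hQ v]
    rw [hφeq]
    apply Submodule.add_mem_sup
    · exact ⟨homogeneousComponent (s + q) u, homogeneousComponent_mem _ _, mul_comm _ _⟩
    · exact ⟨homogeneousComponent (s + p) v, homogeneousComponent_mem _ _, mul_comm _ _⟩
  have hinf : Submodule.map (LinearMap.mulLeft ℂ (P * Q)) (homogeneousSubmodule (Fin m) ℂ s)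
      ≤ A ⊓ B := by
    rintro _ ⟨c, hc, rfl⟩
    constructor
    · exact ⟨Q * c, by
        rw [SetLike.mem_coe, mem_homogeneousSubmodule] at hc ⊢
        simpa [add_comm] using hQ.mul hc, by
        simp only [LinearMap.mulLeft_apply]; ring⟩
    · exact ⟨P * c, by
        rw [SetLike.mem_coe, mem_homogeneousSubmodule] at hc ⊢
        simpa [add_comm] using hP.mul hc, by
        simp only [LinearMap.mulLeft_apply]; ring⟩
  haveI : FiniteDimensional ℂ (A ⊔ B : Submodule ℂ (MvPolynomial (Fin m) ℂ)) :=
    Submodule.finiteDimensional_of_le (sup_le hAle hBle)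
  have h1 : g m (s + p + q) ≤ Module.finrank ℂ (A ⊔ B : Submodule ℂ (MvPolynomial (Fin m) ℂ)) :=
    Submodule.finrank_mono hsup
  have h2 : g m s ≤ Module.finrank ℂ (A ⊓ B : Submodule ℂ (MvPolynomial (Fin m) ℂ)) := by
    rw [← finrank_map_mul (s := s) (mul_ne_zero hP0 hQ0)]
    exact Submodule.finrank_mono hinf
  have h3 := Submodule.finrank_sup_add_finrank_inf_eq A B
  have h4 : Module.finrank ℂ A ≤ g m (s + q) := by
    rw [finrank_map_mul hP0]
  have h5 : Module.finrank ℂ B ≤ g m (s + p) := by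
    rw [finrank_map_mul hQ0]
  omega

/-- Numeric contradiction with the Hilbert-function inequality. -/
lemma no_such_g (g : ℕ → ℕ) (hmono : Monotone g)
    (hlow : ∀ s, (s / 2 + 1) ^ 2 ≤ g s) {p q T : ℕ} (hp : 1 ≤ p) (hq : 1 ≤ q)
    (hineq : ∀ s, T ≤ s → g (s + p + q) + g s ≤ g (s + q) + g (s + p)) : False := by
  set W := g (T + p + q) with hW
  have stepA : ∀ s, T ≤ s → g (s + q) ≤ g s + W := by
    intro s
    induction s using Nat.strong_induction_on with
    | _ s IH =>
      intro hs
      by_cases hcase : s < T + p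
      · have : g (s + q) ≤ W := hmono (by omega)
        omega
      · have hs' : T ≤ s - p := by omega
        have hIH := IH (s - p) (by omega) hs'
        have hkey := hineq (s - p) hs'
        have e1 : s - p + p = s := by omega
        rw [e1] at hkey
        omega
  have stepB : ∀ k, g (T + k * q) ≤ g T + k * W := by
    intro k
    induction k with
    | zero => simp
    | succ k IH =>
      have := stepA (T + k * q) (by omega)
      have e : T + k * q + q = T + (k + 1) * q := by ring
      rw [e] at this
      calc g (T + (k+1) * q) ≤ g (T + k * q) + W := this
        _ ≤ g T + k * W + W := by omega
        _ = g T + (k+1) * W := by ring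
  set E := (g T + W + 1) ^ 2 with hE
  have hE1 : g T ≤ E :=
    le_trans (by omega) (Nat.le_self_pow two_ne_zero (g T + W + 1))
  have hE2 : 2 * W ≤ E := by
    have h1 : (W + 1) ^ 2 ≤ E := Nat.pow_le_pow_left (by omega) 2
    have h2 : (W + 1) ^ 2 = W * W + 2 * W + 1 := by ring
    have h3 : 0 ≤ W * W := Nat.zero_le _
    omega
  have hk := stepB (2 * E)
  have hlow' := hlow (T + 2 * E * q)
  have hdiv : E + 1 ≤ (T + 2 * E * q) / 2 + 1 := by
    have h1 : 2 * E ≤ T + 2 * E * q := by nlinarith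
    have := Nat.div_le_div_right (c := 2) h1
    simp only [Nat.mul_div_cancel_left E (by norm_num : 0 < 2)] at this
    omega
  have hsq : (E + 1) ^ 2 ≤ ((T + 2 * E * q) / 2 + 1) ^ 2 := Nat.pow_le_pow_left hdiv 2
  have hfinal : (E + 1) ^ 2 ≤ g T + 2 * E * W := le_trans (le_trans hsq hlow') hk
  have hEE : 2 * W * E ≤ E * E := Nat.mul_le_mul_right E hE2
  have hexp : (E + 1) ^ 2 = E * E + 2 * E + 1 := by ring
  have hcomm : 2 * E * W = 2 * W * E := by ring
  rw [hexp, hcomm] at hfinal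
  linarith

/-- Two nonzero homogeneous polynomials of positive degree in at least 3 variables
over `ℂ` have a common nontrivial zero. -/
lemma exists_common_zero {m p q : ℕ} (hm : 3 ≤ m) (hp : 1 ≤ p) (hq : 1 ≤ q)
    {P Q : MvPolynomial (Fin m) ℂ} (hP : P.IsHomogeneous p) (hQ : Q.IsHomogeneous q)
    (hP0 : P ≠ 0) (hQ0 : Q ≠ 0) :
    ∃ x : Fin m → ℂ, x ≠ 0 ∧ eval x P = 0 ∧ eval x Q = 0 := by
  by_contra hcon
  push_neg at hcon
  set I := Ideal.span ({P, Q} : Set (MvPolynomial (Fin m) ℂ)) with hI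
  have hPI : P ∈ I := Ideal.subset_span (by simp)
  have hQI : Q ∈ I := Ideal.subset_span (by simp)
  have hzl : MvPolynomial.zeroLocus ℂ I ⊆ {0} := by
    intro x hx
    rw [MvPolynomial.mem_zeroLocus_iff] at hx
    by_contra hx0
    exact hcon x hx0 (hx P hPI) (hx Q hQI)
  have hrad : ∀ i : Fin m, (X i : MvPolynomial (Fin m) ℂ) ∈ I.radical := by
    intro i
    rw [← MvPolynomial.vanishingIdeal_zeroLocus_eq_radical (K := ℂ)]
    rw [MvPolynomial.mem_vanishingIdeal_iff]
    intro x hx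
    have : x = 0 := hzl hx
    subst this
    simp
  have hNi : ∀ i : Fin m, ∃ n, (X i : MvPolynomial (Fin m) ℂ) ^ n ∈ I := fun i => hrad i
  choose Ni hNi using hNi
  set N := (Finset.univ.sup Ni) + 1 with hNdef
  have hXN : ∀ i : Fin m, (X i : MvPolynomial (Fin m) ℂ) ^ N ∈ I := by
    intro i
    have hle : Ni i ≤ N := by
      have := Finset.le_sup (Finset.mem_univ i) (f := Ni); omega
    rw [show N = Ni i + (N - Ni i) by omega, pow_add]
    exact Ideal.mul_mem_right _ _ (hNi i)
  have hT : ∀ t, m * N ≤ t → ∀ φ : MvPolynomial (Fin m) ℂ, φ.IsHomogeneous t → φ ∈ I :=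
    fun t ht φ hφ => homogeneous_mem_span (by omega) (by omega) hXN ht hφ
  exact no_such_g (g m) (g_mono (by omega)) (g_lower hm) hp hq
    (key_ineq hP hQ hP0 hQ0 hT)

end ParabolicAux

open ParabolicAux in
/-- A smooth projective hypersurface of degree `d ≥ 3` in `ℂℙⁿ`, `n ≥ 2`, always has a
parabolic point: a point of the (affine cone over the) hypersurface where the Hessian
matrix of its homogeneous equation is degenerate. -/
theorem smooth_projective_hypersurface_has_parabolic_point
    (n d : ℕ) (hn : 2 ≤ n) (hd : 3 ≤ d)
    (F : MvPolynomial (Fin (n + 1)) ℂ) (hF : F.IsHomogeneous d)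
    (hsmooth : ∀ x : Fin (n + 1) → ℂ, x ≠ 0 → eval x F = 0 →
      ∃ i : Fin (n + 1), eval x (pderiv i F) ≠ 0) :
    ∃ x : Fin (n + 1) → ℂ, x ≠ 0 ∧ eval x F = 0 ∧
      Matrix.det (Matrix.of fun i j : Fin (n + 1) => eval x (pderiv i (pderiv j F))) = 0 := by
  have hm : 3 ≤ n + 1 := by omega
  have hF0 : F ≠ 0 := by
    intro h
    obtain ⟨i, hi⟩ := hsmooth (fun _ => 1) (by
      intro hcon
      have := congrFun hcon 0
      simp at this) (by simp [h])
    simp [h] at hi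
  set Hm : Matrix (Fin (n+1)) (Fin (n+1)) (MvPolynomial (Fin (n+1)) ℂ) :=
    Matrix.of fun i j => pderiv i (pderiv j F) with hHm
  have hHhom : Hm.det.IsHomogeneous ((n+1) * (d - 2)) := by
    apply det_isHomogeneous
    intro i j
    have h1 := pderiv_isHomogeneous hF j
    have h2 := pderiv_isHomogeneous h1 i
    simpa [hHm, show d - 1 - 1 = d - 2 by omega] using h2
  have hdet : ∀ x : Fin (n+1) → ℂ,
      Matrix.det (Matrix.of fun i j : Fin (n + 1) => eval x (pderiv i (pderiv j F)))
        = eval x Hm.det := by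
    intro x
    rw [RingHom.map_det]
    rfl
  by_cases hH0 : Hm.det = 0
  · obtain ⟨x, hx, hPx, -⟩ := exists_common_zero hm (show 1 ≤ d by omega)
      (show 1 ≤ d by omega) hF hF hF0 hF0
    exact ⟨x, hx, hPx, by rw [hdet, hH0, map_zero]⟩
  · obtain ⟨x, hx, hPx, hQx⟩ := exists_common_zero hm (show 1 ≤ d by omega)
      (Nat.mul_pos (by omega) (show 0 < d - 2 by omega) : 0 < (n+1)*(d-2)) hF hHhom hF0 hH0
    exact ⟨x, hx, hPx, by rw [hdet, hQx]⟩
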